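/- (Maximal Ergodic Theorem) Let (X, ℬ, μ) be a probability space, T : X → X a measure-preserving transformation, f ∈ L¹(μ), and c ∈ ℝ a constant. Then ∫_{{f* > c}} (f − c) dμ ≥ 0, where f* = sup_{k≥1} A_k f is the maximal function of f. -/

import Mathlib

open MeasureTheory Filter

namespace MaxErgAux

variable {X : Type*} [MeasurableSpace X] {μ : MeasureTheory.Measure X}

/-- Garsia's maximal function: `garsiaMax T g N x = max_{0 ≤ n ≤ N} birkhoffSum T g n x`. -/
noncomputable def garsiaMax (T : X → X) (g : X → ℝ) : ℕ → X → ℝ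
  | 0 => fun _ => 0
  | N + 1 => fun x => max 0 (g x + garsiaMax T g N (T x))

lemma garsiaMax_nonneg (T : X → X) (g : X → ℝ) (N : ℕ) (x : X) : 0 ≤ garsiaMax T g N x := by
  cases N with
  | zero => exact le_refl 0
  | succ N => exact le_max_left _ _

lemma garsiaMax_succ_le (T : X → X) (g : X → ℝ) (N : ℕ) :
    ∀ x, garsiaMax T g N x ≤ garsiaMax T g (N + 1) x := by
  induction N with
  | zero => intro x; exact garsiaMax_nonneg T g 1 x
  | succ N ih =>
      intro x
      exact max_le_max le_rfl (add_le_add le_rfl (ih (T x)))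

lemma garsiaMax_mono (T : X → X) (g : X → ℝ) {N K : ℕ} (h : N ≤ K) (x : X) :
    garsiaMax T g N x ≤ garsiaMax T g K x :=
  monotone_nat_of_le_succ (fun n => garsiaMax_succ_le T g n x)
    (f := fun n => garsiaMax T g n x) h

lemma garsiaMax_attained (T : X → X) (g : X → ℝ) (N : ℕ) (x : X) :
    ∃ n ≤ N, garsiaMax T g N x = birkhoffSum T g n x := by
  induction N generalizing x with
  | zero => exact ⟨0, le_rfl, (birkhoffSum_zero T g x).symm⟩
  | succ N ih =>
      rcases le_total (g x + garsiaMax T g N (T x)) 0 with h | h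
      · exact ⟨0, Nat.zero_le _, by
          simp [garsiaMax, max_eq_left h, birkhoffSum_zero]⟩
      · rcases ih (T x) with ⟨n, hn, he⟩
        refine ⟨n + 1, Nat.succ_le_succ hn, ?_⟩
        rw [birkhoffSum_succ', ← he]
        simpa [garsiaMax] using max_eq_right h

lemma birkhoffSum_le_garsiaMax (T : X → X) (g : X → ℝ) {n N : ℕ} (h : n ≤ N) (x : X) :
    birkhoffSum T g n x ≤ garsiaMax T g N x := by
  induction N generalizing n x with
  | zero => interval_cases n; simp [garsiaMax, birkhoffSum_zero]
  | succ N ih =>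
      cases n with
      | zero => simpa [birkhoffSum_zero] using garsiaMax_nonneg T g (N + 1) x
      | succ n =>
          rw [birkhoffSum_succ']
          calc g x + birkhoffSum T g n (T x) ≤ g x + garsiaMax T g N (T x) :=
                add_le_add le_rfl (ih (Nat.succ_le_succ_iff.mp h) (T x))
            _ ≤ garsiaMax T g (N + 1) x := le_max_right _ _

lemma garsiaMax_stronglyMeasurable {T : X → X} {g : X → ℝ} (hT : Measurable T)
    (hg : StronglyMeasurable g) (N : ℕ) : StronglyMeasurable (garsiaMax T g N) := by
  induction N with
  | zero => exact stronglyMeasurable_const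
  | succ N ih =>
      have := (stronglyMeasurable_const (b := (0:ℝ))).sup (hg.add (ih.comp_measurable hT))
      simpa [garsiaMax, Pi.sup_def] using this

lemma garsiaMax_integrable [IsFiniteMeasure μ] {T : X → X} {g : X → ℝ} (hT : MeasurePreserving T μ μ)
    (hg : Integrable g μ) (hgm : StronglyMeasurable g) (N : ℕ) :
    Integrable (garsiaMax T g N) μ := by
  induction N with
  | zero => exact integrable_const 0
  | succ N ih =>
      have hcomp : Integrable (garsiaMax T g N ∘ T) μ :=
        (hT.integrable_comp (garsiaMax_stronglyMeasurable hT.measurable hgm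
          N).aestronglyMeasurable).2 ih
      have h2 : Integrable (fun x => g x + garsiaMax T g N (T x)) μ := hg.add hcomp
      have := (integrable_const (0:ℝ)).sup h2
      simpa [garsiaMax, Pi.sup_def] using this

/-- Core step of Garsia's proof. -/
lemma key [IsFiniteMeasure μ] {T : X → X} {g : X → ℝ} (hT : MeasurePreserving T μ μ)
    (hg : Integrable g μ) (hgm : StronglyMeasurable g) (N : ℕ) :
    0 ≤ ∫ x in {x | 0 < garsiaMax T g (N + 1) x}, g x ∂μ := by
  set M : X → ℝ := garsiaMax T g (N + 1) with hM
  set E : Set X := {x | 0 < M x} with hE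
  have hMsm : StronglyMeasurable M := garsiaMax_stronglyMeasurable hT.measurable hgm (N + 1)
  have hEmeas : MeasurableSet E := measurableSet_lt measurable_const hMsm.measurable
  have hMint : Integrable M μ := garsiaMax_integrable hT hg hgm (N + 1)
  have hMTint : Integrable (fun x => M (T x)) μ :=
    (hT.integrable_comp hMsm.aestronglyMeasurable).2 hMint
  -- On E, `M x - M (T x) ≤ g x`.
  have hstep : ∀ x ∈ E, M x - M (T x) ≤ g x := by
    intro x hx
    have hx' : 0 < M x := hx
    have hMx : M x = max 0 (g x + garsiaMax T g N (T x)) := rfl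
    have heq : M x = g x + garsiaMax T g N (T x) := by
      rcases max_choice (0 : ℝ) (g x + garsiaMax T g N (T x)) with h | h
      · rw [hMx, h] at hx'; exact absurd hx' (lt_irrefl 0)
      · rw [hMx, h]
    have : garsiaMax T g N (T x) ≤ M (T x) := garsiaMax_succ_le T g N (T x)
    linarith
  have h1 : ∫ x in E, (M x - M (T x)) ∂μ ≤ ∫ x in E, g x ∂μ :=
    setIntegral_mono_on ((hMint.sub hMTint).integrableOn) hg.integrableOn hEmeas hstep
  -- total integral of `M - M ∘ T` is zero
  have htot : ∫ x, (M x - M (T x)) ∂μ = 0 := by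
    rw [integral_sub hMint hMTint]
    have : ∫ x, M (T x) ∂μ = ∫ x, M x ∂μ := by
      conv_rhs => rw [← hT.map_eq]
      exact (integral_map hT.measurable.aemeasurable
        (by rw [hT.map_eq]; exact hMsm.aestronglyMeasurable)).symm
    rw [this, sub_self]
  have h2 : ∫ x in Eᶜ, (M x - M (T x)) ∂μ ≤ 0 := by
    apply setIntegral_nonpos hEmeas.compl
    intro x hx
    have h0 : M x = 0 := le_antisymm (not_lt.mp hx) (garsiaMax_nonneg T g (N + 1) x)
    have := garsiaMax_nonneg T g (N + 1) (T x)
    simp only [hM] at h0 ⊢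
    linarith
  have h3 : 0 ≤ ∫ x in E, (M x - M (T x)) ∂μ := by
    have := integral_add_compl hEmeas (hMint.sub hMTint)
    simp only [Pi.sub_apply] at this
    linarith [htot, h2, this]
  linarith

/-- Maximal ergodic theorem for strongly measurable `g`, in terms of Birkhoff sums. -/
lemma main [IsFiniteMeasure μ] {T : X → X} {g : X → ℝ} (hT : MeasurePreserving T μ μ)
    (hg : Integrable g μ) (hgm : StronglyMeasurable g) :
    0 ≤ ∫ x in {x | ∃ n : ℕ, 1 ≤ n ∧ 0 < birkhoffSum T g n x}, g x ∂μ := by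
  set E : ℕ → Set X := fun N => {x | 0 < garsiaMax T g (N + 1) x} with hEdef
  have hEmeas : ∀ N, MeasurableSet (E N) := fun N =>
    measurableSet_lt measurable_const
      (garsiaMax_stronglyMeasurable hT.measurable hgm (N + 1)).measurable
  have hEmono : Monotone E := fun N K h x hx =>
    lt_of_lt_of_le hx (garsiaMax_mono T g (Nat.succ_le_succ h) x)
  have hUnion : (⋃ N, E N) = {x | ∃ n : ℕ, 1 ≤ n ∧ 0 < birkhoffSum T g n x} := by
    ext x
    simp only [Set.mem_iUnion, hEdef, Set.mem_setOf_eq]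
    constructor
    · rintro ⟨N, hN⟩
      rcases garsiaMax_attained T g (N + 1) x with ⟨n, hn, he⟩
      refine ⟨n, ?_, he ▸ hN⟩
      rcases Nat.eq_zero_or_pos n with rfl | h
      · rw [he, birkhoffSum_zero] at hN; exact absurd hN (lt_irrefl 0)
      · exact h
    · rintro ⟨n, hn1, hn⟩
      refine ⟨n - 1, lt_of_lt_of_le hn ?_⟩
      have : n - 1 + 1 = n := Nat.succ_pred_eq_of_pos hn1
      rw [this]
      exact birkhoffSum_le_garsiaMax T g le_rfl x
  have hlim := tendsto_setIntegral_of_monotone hEmeas hEmono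
    (hg.integrableOn (s := ⋃ N, E N))
  rw [hUnion] at hlim
  exact ge_of_tendsto hlim (Eventually.of_forall fun N => key hT hg hgm N)

end MaxErgAux

open MaxErgAux in
theorem maximal_ergodic_theorem
    {X : Type*} [MeasurableSpace X] (μ : Measure X) [IsProbabilityMeasure μ]
    (T : X → X) (hT : MeasurePreserving T μ μ)
    (f : X → ℝ) (hf : Integrable f μ) (c : ℝ) :
    0 ≤ ∫ x in {x | ∃ k : ℕ, 1 ≤ k ∧ c < birkhoffAverage ℝ T f k x},
        (f x - c) ∂μ := by
  -- replace `f` by a strongly measurable representative `f'`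
  set f' : X → ℝ := hf.1.mk f with hf'def
  have hf'sm : StronglyMeasurable f' := hf.1.stronglyMeasurable_mk
  have heq : f =ᵐ[μ] f' := hf.1.ae_eq_mk
  have hf'int : Integrable f' μ := hf.congr heq
  -- the two exceptional sets agree a.e.
  have hae : ∀ᵐ x ∂μ, ∀ j : ℕ, f (T^[j] x) = f' (T^[j] x) := by
    rw [ae_all_iff]
    intro j
    exact (hT.iterate j).quasiMeasurePreserving.ae_eq_comp heq
  have hsets : {x | ∃ k : ℕ, 1 ≤ k ∧ c < birkhoffAverage ℝ T f k x}
      =ᵐ[μ] {x | ∃ k : ℕ, 1 ≤ k ∧ c < birkhoffAverage ℝ T f' k x} := by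
    rw [Filter.eventuallyEq_set]
    filter_upwards [hae] with x hx
    have hbs : ∀ k : ℕ, birkhoffAverage ℝ T f k x = birkhoffAverage ℝ T f' k x := by
      intro k
      unfold birkhoffAverage birkhoffSum
      congr 1
      exact Finset.sum_congr rfl fun j _ => hx j
    simp only [Set.mem_setOf_eq, hbs]
  -- rewrite set and integrand
  have hint : (∫ x in {x | ∃ k : ℕ, 1 ≤ k ∧ c < birkhoffAverage ℝ T f k x}, (f x - c) ∂μ)
      = ∫ x in {x | ∃ k : ℕ, 1 ≤ k ∧ c < birkhoffAverage ℝ T f' k x}, (f' x - c) ∂μ := by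
    rw [Measure.restrict_congr_set hsets]
    exact integral_congr_ae (ae_restrict_of_ae (heq.mono fun x hx => by simp only [hx]))
  rw [hint]
  -- translate to Birkhoff sums of `g = f' - c`
  set g : X → ℝ := fun x => f' x - c with hgdef
  have hgint : Integrable g μ := hf'int.sub (integrable_const c)
  have hgsm : StronglyMeasurable g := hf'sm.sub stronglyMeasurable_const
  have hsetg : {x | ∃ k : ℕ, 1 ≤ k ∧ c < birkhoffAverage ℝ T f' k x}
      = {x | ∃ n : ℕ, 1 ≤ n ∧ 0 < birkhoffSum T g n x} := by
    ext x
    simp only [Set.mem_setOf_eq]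
    have hiff : ∀ k : ℕ, 1 ≤ k → (c < birkhoffAverage ℝ T f' k x ↔ 0 < birkhoffSum T g k x) := by
      intro k hk
      have hkpos : (0:ℝ) < (k:ℝ) := by exact_mod_cast hk
      have hsum : birkhoffSum T g k x = birkhoffSum T f' k x - k * c := by
        simp [hgdef, birkhoffSum, Finset.sum_sub_distrib, Finset.sum_const, nsmul_eq_mul]
      rw [hsum, birkhoffAverage, smul_eq_mul, sub_pos]
      rw [inv_mul_eq_div, lt_div_iff₀ hkpos, mul_comm]
    constructor
    · rintro ⟨k, hk, h⟩; exact ⟨k, hk, (hiff k hk).mp h⟩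
    · rintro ⟨k, hk, h⟩; exact ⟨k, hk, (hiff k hk).mpr h⟩
  rw [hsetg]
  exact main hT hgint hgsm
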